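/- The assignment ψ(t) = (-t^{-1}u - 3 - t - u)/2 and ψ(u) = (t^{-1}u - 1 - t - u)/2 extends to a well-defined ℂ-algebra automorphism ψ of R, and ψ has order 2 (ψ ∘ ψ is the identity). -/

import Mathlib

noncomputable section

set_option synthInstance.maxHeartbeats 1000000
set_option maxHeartbeats 1000000

open Polynomial

/-- The polynomial `u² - (t² + 4t)` over the Laurent polynomial ring `ℂ[t,t⁻¹]`. -/
def threePoly : Polynomial (LaurentPolynomial ℂ) :=
  Polynomial.X ^ 2 - Polynomial.C (LaurentPolynomial.T 2 + 4 * LaurentPolynomial.T 1)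

/-- The three-point ring `R = ℂ[t, t⁻¹, u | u² = t² + 4t]`, i.e. the quotient of
`ℂ[t,t⁻¹][u]` by the ideal generated by `u² - t² - 4t`. -/
abbrev R3 : Type := AdjoinRoot threePoly

/-- `t^k` in `R3`, for `k : ℤ`. -/
def tp (k : ℤ) : R3 := AdjoinRoot.of threePoly (LaurentPolynomial.T k)

/-- the element `t` of `R`. -/
def tR : R3 := tp 1

/-- the element `t⁻¹` of `R`. -/
def tInv : R3 := tp (-1)

/-- the element `u` of `R`. -/
def uR : R3 := AdjoinRoot.root threePoly

/-! ### Auxiliary material -/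

/-- `1/2` as an element of `R3`. -/
def qh : R3 := algebraMap ℂ R3 (2⁻¹ : ℂ)

lemma h3 : (2 : R3) * qh = 1 := by
  rw [qh, ← map_ofNat (algebraMap ℂ R3) 2, ← map_mul]; norm_num

lemma h1 : tR * tInv = 1 := by
  rw [tR, tInv, tp, tp, ← map_mul, ← LaurentPolynomial.T_add]
  norm_num

lemma tp_add (m n : ℤ) : tp (m + n) = tp m * tp n := by
  rw [tp, tp, tp, LaurentPolynomial.T_add, map_mul]

lemma h2 : uR ^ 2 = tR ^ 2 + 4 * tR := by
  have h := AdjoinRoot.mk_self (f := threePoly)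
  simp only [threePoly, map_sub, map_pow, AdjoinRoot.mk_X, sub_eq_zero, AdjoinRoot.mk_C] at h
  have : uR ^ 2 = AdjoinRoot.of threePoly (LaurentPolynomial.T 2 + 4 * LaurentPolynomial.T 1) := by
    have h0 := AdjoinRoot.eval₂_root threePoly
    have e : ∀ (x : R3), threePoly.eval₂ (AdjoinRoot.of threePoly) x = x ^ 2 - AdjoinRoot.of threePoly (LaurentPolynomial.T 2 + 4 * LaurentPolynomial.T 1) := by
      intro x; show eval₂ (AdjoinRoot.of threePoly) x (X ^ 2 - C (LaurentPolynomial.T 2 + 4 * LaurentPolynomial.T 1)) = _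
      rw [eval₂_sub, eval₂_pow, eval₂_X, eval₂_C]
    rw [e, sub_eq_zero] at h0
    exact h0
  rw [this, map_add, map_mul, map_ofNat]
  have : AdjoinRoot.of threePoly (LaurentPolynomial.T 2) = tR ^ 2 := by
    rw [tR, tp, pow_two, ← map_mul, ← LaurentPolynomial.T_add]; norm_num
  rw [this, tR, tp]

/-- the numerator of `ψ(t)`. -/
def AA : R3 := -(tInv * uR) - 3 - tR - uR

/-- the numerator of `ψ(t)⁻¹`. -/
def BB : R3 := tR ^ 2 + 3 * tR - (1 + tR) * uR

/-- the numerator of `ψ(u)`. -/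
def WW : R3 := tInv * uR - 1 - tR - uR

lemma key1 : (qh * AA) * (qh * BB) = 1 := by
  rw [AA, BB]
  linear_combination (qh^2*(4 - 3*uR + uR^2 + tR - tR*uR)) * h1 +
    (qh^2*(2 + tInv + tR)) * h2 + (1 + 2*qh) * h3

lemma key2 : (qh * WW) ^ 2 = (qh * AA) ^ 2 + 4 * (qh * AA) := by
  rw [AA, WW]
  linear_combination (qh^2*(-16 - 4*uR - 4*tR)) * h1 + (-4*tInv*qh^2) * h2 +
    (qh*(-12 - 4*uR - 4*tInv*uR - 4*tR)) * h3

lemma key3 : qh * (-((qh * BB) * (qh * WW)) - 3 - (qh * AA) - (qh * WW)) = tR := by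
  rw [AA, BB, WW]
  linear_combination (qh^3*(4 - 3*uR + uR^2 + tR - tR*uR)) * h1 + (qh^3*(tInv - tR)) * h2 +
    (3*qh + 2*qh^2 - 2*uR*qh^2 + tR + 2*tR*qh + 2*tR*qh^2) * h3

lemma key4 : qh * ((qh * BB) * (qh * WW) - 1 - (qh * AA) - (qh * WW)) = uR := by
  rw [AA, BB, WW]
  linear_combination (qh^3*(-4 + 3*uR - uR^2 - tR + tR*uR)) * h1 + (qh^3*(-tInv + tR)) * h2 +
    (qh - 2*qh^2 + uR + 2*uR*qh + 2*uR*qh^2 - 2*tR*qh^2) * h3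

/-- Lifting a `ℂ`-algebra map on Laurent polynomials together with a square root of
`t² + 4t` to a `ℂ`-algebra map on `R3`. -/
def liftA {S : Type} [CommRing S] [Algebra ℂ S] (L : LaurentPolynomial ℂ →ₐ[ℂ] S)
    (x : S) (h : threePoly.eval₂ L.toRingHom x = 0) : R3 →ₐ[ℂ] S :=
  { AdjoinRoot.lift L.toRingHom x h with
    commutes' := fun c => by
      have e : algebraMap ℂ R3 c = AdjoinRoot.of threePoly (algebraMap ℂ (LaurentPolynomial ℂ) c) :=
        rfl
      show AdjoinRoot.lift L.toRingHom x h (algebraMap ℂ R3 c) = algebraMap ℂ S c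
      rw [e, AdjoinRoot.lift_of]
      exact L.commutes c }

lemma liftA_of {S : Type} [CommRing S] [Algebra ℂ S] (L : LaurentPolynomial ℂ →ₐ[ℂ] S)
    (x : S) (h : threePoly.eval₂ L.toRingHom x = 0) (p : LaurentPolynomial ℂ) :
    liftA L x h (AdjoinRoot.of threePoly p) = L p := AdjoinRoot.lift_of h

lemma liftA_root {S : Type} [CommRing S] [Algebra ℂ S] (L : LaurentPolynomial ℂ →ₐ[ℂ] S)
    (x : S) (h : threePoly.eval₂ L.toRingHom x = 0) :
    liftA L x h uR = x := AdjoinRoot.lift_root h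

/-- The `ℂ`-algebra map on Laurent polynomials sending `T 1` to a given unit. -/
def Lhom {S : Type} [CommRing S] [Algebra ℂ S] (v : Sˣ) : LaurentPolynomial ℂ →ₐ[ℂ] S :=
  AddMonoidAlgebra.lift ℂ S ℤ ((Units.coeHom S).comp (zpowersHom Sˣ v))

lemma Lhom_T {S : Type} [CommRing S] [Algebra ℂ S] (v : Sˣ) (k : ℤ) :
    Lhom v (LaurentPolynomial.T k) = ((v ^ k : Sˣ) : S) := by
  have : (LaurentPolynomial.T k : LaurentPolynomial ℂ) = AddMonoidAlgebra.single k 1 := rfl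
  rw [Lhom, this, AddMonoidAlgebra.lift_single]
  simp

lemma eval₂_threePoly {S : Type} [CommRing S] [Algebra ℂ S] (L : LaurentPolynomial ℂ →ₐ[ℂ] S)
    (x : S) : threePoly.eval₂ L.toRingHom x
      = x ^ 2 - (L (LaurentPolynomial.T 2) + 4 * L (LaurentPolynomial.T 1)) := by
  simp [threePoly, eval₂_sub, eval₂_pow, eval₂_X, eval₂_C, map_ofNat]

lemma adjoin_top : Algebra.adjoin ℂ ({tR, tInv, uR} : Set R3) = ⊤ := by
  rw [eq_top_iff]
  intro x _hx
  set S := Algebra.adjoin ℂ ({tR, tInv, uR} : Set R3) with hS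
  have htR : tR ∈ S := Algebra.subset_adjoin (by simp)
  have htI : tInv ∈ S := Algebra.subset_adjoin (by simp)
  have huR : uR ∈ S := Algebra.subset_adjoin (by simp)
  have htp : ∀ k : ℤ, tp k ∈ S := by
    intro k
    induction k using Int.induction_on with
    | zero => have : tp 0 = 1 := by rw [tp, LaurentPolynomial.T_zero, map_one]
              rw [this]; exact one_mem S
    | succ k ih => rw [show (k:ℤ) + 1 = k + 1 from rfl, tp_add]; exact mul_mem ih htR
    | pred k ih => rw [show -(k:ℤ) - 1 = -k + (-1) by ring, tp_add]; exact mul_mem ih htI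
  have hof : ∀ p : LaurentPolynomial ℂ, AdjoinRoot.of threePoly p ∈ S := by
    intro p
    induction p using LaurentPolynomial.induction_on' with
    | add p q hp hq => rw [map_add]; exact add_mem hp hq
    | C_mul_T n a =>
        rw [map_mul]
        refine mul_mem ?_ (htp n)
        have : AdjoinRoot.of threePoly (LaurentPolynomial.C a) = algebraMap ℂ R3 a := rfl
        rw [this]
        exact S.algebraMap_mem a
  clear _hx
  obtain ⟨p, rfl⟩ := AdjoinRoot.mk_surjective x
  induction p using Polynomial.induction_on' with
  | add p q hp hq => rw [map_add]; exact add_mem hp hq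
  | monomial n a =>
      rw [← Polynomial.C_mul_X_pow_eq_monomial, map_mul, map_pow, AdjoinRoot.mk_C,
        AdjoinRoot.mk_X]
      exact mul_mem (hof a) (pow_mem huR n)

lemma hom_ext {f g : R3 →ₐ[ℂ] R3} (e1 : f tR = g tR) (e2 : f tInv = g tInv)
    (e3 : f uR = g uR) : f = g := by
  have hle : Algebra.adjoin ℂ ({tR, tInv, uR} : Set R3) ≤ AlgHom.equalizer f g := by
    apply Algebra.adjoin_le
    rintro x hx
    simp only [Set.mem_insert_iff, Set.mem_singleton_iff] at hx
    rcases hx with rfl | rfl | rfl <;> assumption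
  rw [adjoin_top, top_le_iff] at hle
  refine AlgHom.ext fun x => ?_
  have : x ∈ AlgHom.equalizer f g := by rw [hle]; trivial
  exact this

/-- The image of `t` under `ψ`, as a unit. -/
def aU : R3ˣ := ⟨qh * AA, qh * BB, key1, by rw [mul_comm]; exact key1⟩

lemma hW : threePoly.eval₂ (Lhom aU).toRingHom (qh * WW) = 0 := by
  rw [eval₂_threePoly, Lhom_T, Lhom_T]
  have e1 : ((aU ^ (1:ℤ) : R3ˣ) : R3) = qh * AA := by rw [zpow_one]; rfl
  have e2 : ((aU ^ (2:ℤ) : R3ˣ) : R3) = (qh * AA) ^ 2 := by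
    rw [show (2:ℤ) = ((2:ℕ):ℤ) from rfl, zpow_natCast, Units.val_pow_eq_pow_val]; rfl
  rw [e1, e2, key2]; ring

/-- The endomorphism `ψ` as an algebra hom. -/
def phi : R3 →ₐ[ℂ] R3 := liftA (Lhom aU) (qh * WW) hW

lemma phi_tR : phi tR = qh * AA := by
  rw [tR, tp, phi, liftA_of, Lhom_T, zpow_one]; rfl

lemma phi_tInv : phi tInv = qh * BB := by
  rw [tInv, tp, phi, liftA_of, Lhom_T, zpow_neg_one]; rfl

lemma phi_uR : phi uR = qh * WW := by rw [phi]; exact liftA_root _ _ _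

lemma phi_qh : phi qh = qh := phi.commutes (2⁻¹ : ℂ)

lemma phi_AA : phi AA = -((qh * BB) * (qh * WW)) - 3 - (qh * AA) - (qh * WW) := by
  conv_lhs => rw [AA]
  rw [map_sub, map_sub, map_sub, map_neg, map_mul, map_ofNat, phi_tR, phi_tInv, phi_uR, AA]

lemma phi_phi_tR : phi (phi tR) = tR := by
  rw [phi_tR, map_mul, phi_qh, phi_AA, key3]

lemma phi_phi_uR : phi (phi uR) = uR := by
  rw [phi_uR, map_mul, phi_qh, WW, map_sub, map_sub, map_sub, map_mul, map_one,
    phi_tR, phi_tInv, phi_uR]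
  rw [show qh * ((qh * BB) * (qh * WW) - 1 - qh * AA - qh * WW) = uR from key4]

lemma phi_phi_tInv : phi (phi tInv) = tInv := by
  have e : tR * (phi (phi tInv)) = 1 := by
    rw [← phi_phi_tR, ← map_mul, ← map_mul, h1, map_one, map_one]
  calc phi (phi tInv) = (tInv * tR) * phi (phi tInv) := by
        rw [mul_comm tInv tR, h1, one_mul]
    _ = tInv * (tR * phi (phi tInv)) := by ring
    _ = tInv := by rw [e, mul_one]

lemma keyComp : phi.comp phi = AlgHom.id ℂ R3 :=
  hom_ext phi_phi_tR phi_phi_tInv phi_phi_uR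

/-- the evaluation map `t ↦ 1`, `u ↦ √5`. -/
def evA : R3 →ₐ[ℂ] ℂ := by
  refine liftA (Lhom (1 : ℂˣ)) ((Real.sqrt 5 : ℝ) : ℂ) ?_
  rw [eval₂_threePoly, Lhom_T, Lhom_T, one_zpow, one_zpow, Units.val_one]
  rw [← Complex.ofReal_pow, Real.sq_sqrt (by norm_num : (0:ℝ) ≤ 5)]
  norm_num

lemma evA_tR : evA tR = 1 := by
  rw [tR, tp, evA, liftA_of, Lhom_T, one_zpow, Units.val_one]

lemma evA_tInv : evA tInv = 1 := by
  rw [tInv, tp, evA, liftA_of, Lhom_T, one_zpow, Units.val_one]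

lemma evA_uR : evA uR = ((Real.sqrt 5 : ℝ) : ℂ) := by
  rw [evA]; exact liftA_root _ _ _

lemma evA_qh : evA qh = (2⁻¹ : ℂ) := evA.commutes (2⁻¹ : ℂ)

lemma qhAA_ne : qh * AA ≠ tR := by
  intro h
  have := congrArg evA h
  rw [map_mul, evA_qh, evA_tR, AA, map_sub, map_sub, map_sub, map_neg, map_mul,
    map_ofNat, evA_tR, evA_tInv, evA_uR] at this
  have h5 : ((Real.sqrt 5 : ℝ) : ℂ) = ((-3 : ℝ) : ℂ) := by
    push_cast
    linear_combination -this
  have h5' : Real.sqrt 5 = -3 := Complex.ofReal_inj.mp h5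
  nlinarith [Real.sqrt_nonneg 5]

/-- The automorphism `ψ`. -/
def psi : R3 ≃ₐ[ℂ] R3 := AlgEquiv.ofAlgHom phi phi keyComp keyComp

/-- The assignment `ψ(t) = (-t⁻¹u - 3 - t - u)/2`, `ψ(u) = (t⁻¹u - 1 - t - u)/2` extends to a
well-defined `ℂ`-algebra automorphism `ψ` of `R`, and `ψ` has order 2 (`ψ ∘ ψ` is the
identity). -/
theorem stmt_2 :
    ∃ ψ : R3 ≃ₐ[ℂ] R3,
      ψ tR = (2 : ℂ)⁻¹ • (-(tInv * uR) - 3 - tR - uR) ∧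
      ψ uR = (2 : ℂ)⁻¹ • (tInv * uR - 1 - tR - uR) ∧
      ψ ≠ AlgEquiv.refl ∧
      ψ.trans ψ = AlgEquiv.refl := by
  refine ⟨psi, ?_, ?_, ?_, ?_⟩
  · show phi tR = _
    rw [phi_tR, Algebra.smul_def, AA]; rfl
  · show phi uR = _
    rw [phi_uR, Algebra.smul_def, WW]; rfl
  · intro h
    have hψt : psi tR = qh * AA := phi_tR
    rw [h] at hψt
    exact qhAA_ne hψt.symm
  · apply AlgEquiv.ext
    intro x
    have := AlgHom.congr_fun keyComp x
    simpa [psi] using this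

end
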